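/- Let S_Z be an orbital fuzzy iterated function system and u ∈ F*_S. Then the pointwise supremum ∨_{x∈[u]^*} u_x is attained pointwise as a maximum: for every y ∈ X there exists x ∈ [u]^* with u_x(y) = sup_{z∈[u]^*} u_z(y). -/

import Mathlib

open Metric Filter Topology Set

/-- The orbit of a point `x` under the family of maps `f i`:
`x` together with all images of `x` under finite compositions of the `f i`. -/
def orbitIFS {X I : Type*} (f : I → X → X) (x : X) : Set X :=
  ⋃ l : List I, {l.foldr (fun i y => f i y) x}

/-- The fractal (Hutchinson–Barnsley) operator `K ↦ ⋃ i, f i '' K`. -/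
def fractalOp {X I : Type*} (f : I → X → X) (K : Set X) : Set X :=
  ⋃ i, f i '' K

/-- Image of a fuzzy set under a map: `f(u)(y) = sup_{x ∈ f⁻¹ y} u x` (0 if empty). -/
noncomputable def fuzzyImage {X : Type*} (g : X → X) (u : X → ℝ) : X → ℝ :=
  fun y => sSup (u '' (g ⁻¹' {y}))

/-- The fuzzy Hutchinson–Barnsley operator `Z(u) = ∨ i, ρ i (f i (u))`. -/
noncomputable def Zop {X I : Type*} (f : I → X → X) (ρ : I → ℝ → ℝ) (u : X → ℝ) : X → ℝ :=
  fun y => ⨆ i, ρ i (fuzzyImage (f i) u y)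

/-- The metric `d_∞(u,v) = sup_{α ∈ (0,1]} h([u]^α, [v]^α)`. -/
noncomputable def dInfty {X : Type*} [MetricSpace X] (u v : X → ℝ) : ℝ :=
  ⨆ α : Ioc (0:ℝ) 1, hausdorffDist {x | (α:ℝ) ≤ u x} {x | (α:ℝ) ≤ v x}

/-- The support of a fuzzy set: the closure of `{x | 0 < u x}`. -/
def fsupp {X : Type*} [MetricSpace X] (u : X → ℝ) : Set X := closure {x | 0 < u x}

/-- The crisp fuzzy point `δ_s`. -/
def fdelta {X : Type*} [DecidableEq X] (s : X) : X → ℝ := fun t => if t = s then 1 else 0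

/-- `u^x` : the restriction of `u` to the closure of the orbit of `w` (zero outside). -/
noncomputable def restrictO {X I : Type*} [MetricSpace X] (f : I → X → X) (u : X → ℝ)
    (w : X) : X → ℝ :=
  (closure (orbitIFS f w)).indicator u

/-- A normal compactly supported fuzzy set (with values in `[0,1]`). -/
def IsFuzzyN {X : Type*} [MetricSpace X] (u : X → ℝ) : Prop :=
  (∀ x, u x ∈ Icc (0:ℝ) 1) ∧ (∃ x, u x = 1) ∧ IsCompact (fsupp u)

/-- An upper semicontinuous normal compactly supported fuzzy set: membership in `F*_X`. -/
def IsFuzzyStar {X : Type*} [MetricSpace X] (u : X → ℝ) : Prop :=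
  IsFuzzyN u ∧ UpperSemicontinuous u

/-- Membership in `F*_S`: for each point of positive membership there is an orbit
containing it together with a point of membership one. -/
def InFS {X I : Type*} [MetricSpace X] (f : I → X → X) (u : X → ℝ) : Prop :=
  IsFuzzyStar u ∧ ∀ x, 0 < u x → ∃ w y, x ∈ orbitIFS f w ∧ y ∈ orbitIFS f w ∧ u y = 1

/-- The orbital contraction condition. -/
def OrbitalContr {X I : Type*} [MetricSpace X] (f : I → X → X) (C : ℝ) : Prop :=
  ∀ i x, ∀ y ∈ orbitIFS f x, ∀ z ∈ orbitIFS f x, dist (f i y) (f i z) ≤ C * dist y z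

/-- An admissible system of grey level maps. -/
def Admissible {I : Type*} (ρ : I → ℝ → ℝ) : Prop :=
  (∀ i, ρ i 0 = 0) ∧ (∀ i, MonotoneOn (ρ i) (Icc (0:ℝ) 1)) ∧
  (∀ i, ∀ t ∈ Icc (0:ℝ) 1, ContinuousWithinAt (ρ i) (Ici t) t) ∧
  (∀ i, ∀ t ∈ Icc (0:ℝ) 1, ρ i t ∈ Icc (0:ℝ) 1) ∧ (∃ j, ρ j 1 = 1)

set_option linter.unusedSectionVars false

namespace Stmt10Aux

variable {X I : Type*} [MetricSpace X] [DecidableEq X] [Finite I] [Nonempty I]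

/-- Word action of the IFS. -/
def wf (f : I → X → X) (w : List I) (x : X) : X := w.foldr (fun i y => f i y) x

@[simp] lemma wf_nil (f : I → X → X) (x : X) : wf f [] x = x := rfl

@[simp] lemma wf_cons (f : I → X → X) (i : I) (w : List I) (x : X) :
    wf f (i :: w) x = f i (wf f w x) := rfl

lemma wf_append (f : I → X → X) (w v : List I) (x : X) :
    wf f (w ++ v) x = wf f w (wf f v x) := by
  simp [wf, List.foldr_append]

lemma wf_mem_orbit (f : I → X → X) (w : List I) (x : X) : wf f w x ∈ orbitIFS f x := by
  exact Set.mem_iUnion.2 ⟨w, rfl⟩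

lemma mem_orbit_iff {f : I → X → X} {x a : X} :
    a ∈ orbitIFS f x ↔ ∃ w : List I, wf f w x = a := by
  simp [orbitIFS, wf, eq_comm]

/-- Grey level of a word. -/
def gam (ρ : I → ℝ → ℝ) : List I → ℝ
  | [] => 1
  | i :: w => ρ i (gam ρ w)

@[simp] lemma gam_nil (ρ : I → ℝ → ℝ) : gam ρ [] = 1 := rfl

@[simp] lemma gam_cons (ρ : I → ℝ → ℝ) (i : I) (w : List I) :
    gam ρ (i :: w) = ρ i (gam ρ w) := rfl

lemma gam_mem_Icc {ρ : I → ℝ → ℝ} (hρ : Admissible ρ) : ∀ w : List I, gam ρ w ∈ Icc (0:ℝ) 1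
  | [] => by simp
  | i :: w => hρ.2.2.2.1 i _ (gam_mem_Icc hρ w)

lemma gam_replicate {ρ : I → ℝ → ℝ} {j : I} (hj : ρ j 1 = 1) :
    ∀ n, gam ρ (List.replicate n j) = 1
  | 0 => rfl
  | n + 1 => by simp [List.replicate_succ, gam_replicate hj n, hj]

lemma fuzzyImage_mem_Icc (g : X → X) {v : X → ℝ} (hv : ∀ x, v x ∈ Icc (0:ℝ) 1) (y : X) :
    fuzzyImage g v y ∈ Icc (0:ℝ) 1 := by
  unfold fuzzyImage
  rcases eq_empty_or_nonempty (g ⁻¹' {y}) with h | ⟨x, hx⟩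
  · simp [h, Real.sSup_empty]
  · constructor
    · exact le_trans (hv x).1 (le_csSup ⟨1, by rintro _ ⟨q, _, rfl⟩; exact (hv q).2⟩
        (mem_image_of_mem v hx))
    · exact csSup_le ⟨v x, mem_image_of_mem v hx⟩ (by rintro _ ⟨q, _, rfl⟩; exact (hv q).2)

lemma Zop_mem_Icc {f : I → X → X} {ρ : I → ℝ → ℝ} (hρ : Admissible ρ) {v : X → ℝ}
    (hv : ∀ x, v x ∈ Icc (0:ℝ) 1) (y : X) : Zop f ρ v y ∈ Icc (0:ℝ) 1 := by
  show (⨆ i, ρ i (fuzzyImage (f i) v y)) ∈ Icc (0:ℝ) 1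
  have hterm : ∀ i, ρ i (fuzzyImage (f i) v y) ∈ Icc (0:ℝ) 1 := fun i =>
    hρ.2.2.2.1 i _ (fuzzyImage_mem_Icc (f i) hv y)
  constructor
  · exact le_trans (hterm (Classical.arbitrary I)).1
      (le_ciSup (f := fun i => ρ i (fuzzyImage (f i) v y))
        (Set.finite_range _).bddAbove (Classical.arbitrary I))
  · exact ciSup_le fun i => (hterm i).2

lemma iter_mem_Icc {f : I → X → X} {ρ : I → ℝ → ℝ} (hρ : Admissible ρ) (x : X) :
    ∀ n p, (Zop f ρ)^[n] (fdelta x) p ∈ Icc (0:ℝ) 1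
  | 0, p => by by_cases h : p = x <;> simp [fdelta, h]
  | n + 1, p => by
    rw [Function.iterate_succ_apply']
    exact Zop_mem_Icc hρ (iter_mem_Icc hρ x n) p

lemma range_finite_Zop {f : I → X → X} {ρ : I → ℝ → ℝ} {v : X → ℝ}
    (hv : (Set.range v).Finite) : (Set.range (Zop f ρ v)).Finite := by
  have hsub : Set.range (Zop f ρ v) ⊆ ⋃ i, ρ i '' insert 0 (Set.range v) := by
    rintro _ ⟨p, rfl⟩
    obtain ⟨i0, hi0⟩ := Finite.exists_max (fun i => ρ i (fuzzyImage (f i) v p))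
    have hZ : Zop f ρ v p = ρ i0 (fuzzyImage (f i0) v p) := by
      show (⨆ i, ρ i (fuzzyImage (f i) v p)) = _
      exact le_antisymm (ciSup_le hi0)
        (le_ciSup (f := fun i => ρ i (fuzzyImage (f i) v p)) (Set.finite_range _).bddAbove i0)
    have hmem : fuzzyImage (f i0) v p ∈ insert (0:ℝ) (Set.range v) := by
      unfold fuzzyImage
      rcases eq_empty_or_nonempty (v '' (f i0 ⁻¹' {p})) with h | h
      · simp [h, Real.sSup_empty]
      · exact Set.mem_insert_of_mem _
          (Set.image_subset_range v _ (h.csSup_mem (hv.subset (Set.image_subset_range v _))))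
    exact Set.mem_iUnion.2 ⟨i0, hZ ▸ Set.mem_image_of_mem _ hmem⟩
  exact (Set.finite_iUnion fun i => (hv.insert 0).image (ρ i)).subset hsub

lemma range_finite_iter {f : I → X → X} {ρ : I → ℝ → ℝ} (x : X) :
    ∀ n, (Set.range ((Zop f ρ)^[n] (fdelta x))).Finite
  | 0 => by
    refine ((Set.finite_singleton (1:ℝ)).insert 0).subset ?_
    rintro _ ⟨p, rfl⟩
    by_cases h : p = x <;> simp [fdelta, h]
  | n + 1 => by
    rw [Function.iterate_succ']
    exact range_finite_Zop (range_finite_iter x n)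

/-- Key formula: membership in a positive level set of `Z^[n] δ_x` is witnessed by words. -/
lemma level_iter {f : I → X → X} {ρ : I → ℝ → ℝ} (hρ : Admissible ρ) :
    ∀ (n : ℕ) (x : X) (α : ℝ), 0 < α → ∀ p : X,
      (α ≤ (Zop f ρ)^[n] (fdelta x) p ↔
        ∃ w : List I, w.length = n ∧ α ≤ gam ρ w ∧ wf f w x = p) := by
  intro n
  induction n with
  | zero =>
    intro x α hα p
    simp only [Function.iterate_zero, id_eq]
    constructor
    · intro h
      by_cases hpx : p = x
      · refine ⟨[], rfl, ?_, hpx.symm⟩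
        simpa [fdelta, hpx] using h
      · simp [fdelta, hpx] at h; linarith
    · rintro ⟨w, hw0, hgw, hwx⟩
      rw [List.length_eq_zero_iff] at hw0
      subst hw0
      simp only [wf_nil] at hwx
      simpa [fdelta, hwx.symm] using hgw
  | succ n IH =>
    intro x α hα p
    rw [Function.iterate_succ_apply']
    set v := (Zop f ρ)^[n] (fdelta x) with hvdef
    have hv : ∀ q, v q ∈ Icc (0:ℝ) 1 := iter_mem_Icc hρ x n
    constructor
    · intro h
      have h' : α ≤ ⨆ i, ρ i (fuzzyImage (f i) v p) := h
      obtain ⟨i0, hi0⟩ := Finite.exists_max (fun i => ρ i (fuzzyImage (f i) v p))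
      have hZ : (⨆ i, ρ i (fuzzyImage (f i) v p)) = ρ i0 (fuzzyImage (f i0) v p) :=
        le_antisymm (ciSup_le hi0)
          (le_ciSup (f := fun i => ρ i (fuzzyImage (f i) v p)) (Set.finite_range _).bddAbove i0)
      rw [hZ] at h'
      have hS : (v '' (f i0 ⁻¹' {p})).Nonempty := by
        rcases eq_empty_or_nonempty (v '' (f i0 ⁻¹' {p})) with hemp | hne
        · exfalso
          have : fuzzyImage (f i0) v p = 0 := by
            unfold fuzzyImage; rw [hemp]; exact Real.sSup_empty
          rw [this, hρ.1 i0] at h'; linarith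
        · exact hne
      have hfin : (v '' (f i0 ⁻¹' {p})).Finite :=
        (range_finite_iter x n).subset (Set.image_subset_range _ _)
      have hmem : fuzzyImage (f i0) v p ∈ v '' (f i0 ⁻¹' {p}) := hS.csSup_mem hfin
      obtain ⟨q, hq, hvq⟩ := hmem
      have hα' : α ≤ ρ i0 (v q) := by rwa [hvq]
      have hvqpos : 0 < v q := by
        rcases lt_or_ge 0 (v q) with h0 | h0
        · exact h0
        · exfalso
          have : v q = 0 := le_antisymm h0 (hv q).1
          rw [this, hρ.1 i0] at hα'; linarith
      obtain ⟨w, hwl, hgw, hwx⟩ := (IH x (v q) hvqpos q).1 le_rfl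
      refine ⟨i0 :: w, by simp [hwl], ?_, ?_⟩
      · calc α ≤ ρ i0 (v q) := hα'
          _ ≤ ρ i0 (gam ρ w) := hρ.2.1 i0 (hv q) (gam_mem_Icc hρ w) hgw
          _ = gam ρ (i0 :: w) := rfl
      · simp only [wf_cons, hwx]
        exact hq
    · rintro ⟨w, hwl, hgw, hwx⟩
      cases w with
      | nil => simp at hwl
      | cons i w' =>
        have hwl' : w'.length = n := by simpa using hwl
        have hg' : 0 < gam ρ w' := by
          rcases lt_or_ge 0 (gam ρ w') with h0 | h0
          · exact h0
          · exfalso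
            have : gam ρ w' = 0 := le_antisymm h0 (gam_mem_Icc hρ w').1
            rw [gam_cons, this, hρ.1 i] at hgw; linarith
        have hv' : gam ρ w' ≤ v (wf f w' x) :=
          (IH x (gam ρ w') hg' (wf f w' x)).2 ⟨w', hwl', le_rfl, rfl⟩
        have hmem : wf f w' x ∈ f i ⁻¹' {p} := by
          simp only [Set.mem_preimage, Set.mem_singleton_iff]
          simpa using hwx
        have ht : v (wf f w' x) ≤ fuzzyImage (f i) v p :=
          le_csSup ⟨1, by rintro _ ⟨q, _, rfl⟩; exact (hv q).2⟩ (Set.mem_image_of_mem v hmem)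
        have hIm : fuzzyImage (f i) v p ∈ Icc (0:ℝ) 1 := fuzzyImage_mem_Icc (f i) hv p
        calc α ≤ gam ρ (i :: w') := hgw
          _ = ρ i (gam ρ w') := rfl
          _ ≤ ρ i (fuzzyImage (f i) v p) :=
            hρ.2.1 i (gam_mem_Icc hρ w') hIm (le_trans hv' ht)
          _ ≤ ⨆ i', ρ i' (fuzzyImage (f i') v p) :=
            le_ciSup (f := fun i' => ρ i' (fuzzyImage (f i') v p)) (Set.finite_range _).bddAbove i
          _ = Zop f ρ v p := rfl

/-- Level sets of the iterates as images of word sets. -/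
lemma lev_iter_eq {f : I → X → X} {ρ : I → ℝ → ℝ} (hρ : Admissible ρ) (n : ℕ) (x : X)
    {α : ℝ} (hα : 0 < α) :
    {p : X | α ≤ (Zop f ρ)^[n] (fdelta x) p} =
      (fun w : List I => wf f w x) '' {w | w.length = n ∧ α ≤ gam ρ w} := by
  ext p
  rw [Set.mem_setOf_eq, level_iter hρ n x α hα p]
  constructor
  · rintro ⟨w, h1, h2, h3⟩; exact ⟨w, ⟨h1, h2⟩, h3⟩
  · rintro ⟨w, ⟨h1, h2⟩, h3⟩; exact ⟨w, h1, h2, h3⟩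

lemma lev_iter_nonempty {f : I → X → X} {ρ : I → ℝ → ℝ} (hρ : Admissible ρ) (n : ℕ) (x : X)
    {α : ℝ} (hα : 0 < α) (hα1 : α ≤ 1) :
    {p : X | α ≤ (Zop f ρ)^[n] (fdelta x) p}.Nonempty := by
  obtain ⟨j, hj⟩ := hρ.2.2.2.2
  exact ⟨wf f (List.replicate n j) x,
    (level_iter hρ n x α hα _).2 ⟨List.replicate n j, List.length_replicate,
      by rw [gam_replicate hj n]; exact hα1, rfl⟩⟩

lemma lev_iter_finite {f : I → X → X} {ρ : I → ℝ → ℝ} (hρ : Admissible ρ) (n : ℕ) (x : X)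
    {α : ℝ} (hα : 0 < α) : {p : X | α ≤ (Zop f ρ)^[n] (fdelta x) p}.Finite := by
  rw [lev_iter_eq hρ n x hα]
  exact ((List.finite_length_eq (α := I) (n := n)).subset (fun w hw => hw.1)).image _

lemma orbit_bound {f : I → X → X} {C : ℝ} (hC0 : 0 ≤ C) (hC1 : C < 1)
    (horb : OrbitalContr f C) (z : X) :
    ∃ D : ℝ, 0 ≤ D ∧ ∀ w : List I, dist (wf f w z) z ≤ D := by
  obtain ⟨i0, hi0⟩ := Finite.exists_max (fun i => dist (f i z) z)
  set M := dist (f i0 z) z with hM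
  have hM0 : 0 ≤ M := dist_nonneg
  have h1C : 0 < 1 - C := by linarith
  refine ⟨M / (1 - C), by positivity, ?_⟩
  intro w
  induction w with
  | nil => simp; positivity
  | cons i w ih =>
    have h1 : dist (f i (wf f w z)) (f i z) ≤ C * dist (wf f w z) z :=
      horb i z (wf f w z) (wf_mem_orbit f w z) z (wf_mem_orbit f [] z)
    calc dist (wf f (i :: w) z) z ≤ dist (f i (wf f w z)) (f i z) + dist (f i z) z :=
        dist_triangle _ _ _
      _ ≤ C * (M / (1 - C)) + M := by
          refine add_le_add (h1.trans ?_) (hi0 i)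
          exact mul_le_mul_of_nonneg_left ih hC0
      _ = M / (1 - C) := by field_simp; ring

lemma wf_contract {f : I → X → X} {C : ℝ} (hC0 : 0 ≤ C) (horb : OrbitalContr f C) :
    ∀ (w : List I) (z a : X), a ∈ orbitIFS f z →
      dist (wf f w a) (wf f w z) ≤ C ^ w.length * dist a z := by
  intro w
  induction w with
  | nil => intro z a _; simp
  | cons i w ih =>
    intro z a ha
    obtain ⟨v, hv⟩ := mem_orbit_iff.1 ha
    have hmem : wf f w a ∈ orbitIFS f z := by
      rw [← hv, ← wf_append]; exact wf_mem_orbit f _ z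
    have h1 : dist (f i (wf f w a)) (f i (wf f w z)) ≤ C * dist (wf f w a) (wf f w z) :=
      horb i z (wf f w a) hmem (wf f w z) (wf_mem_orbit f w z)
    calc dist (wf f (i :: w) a) (wf f (i :: w) z)
        ≤ C * dist (wf f w a) (wf f w z) := h1
      _ ≤ C * (C ^ w.length * dist a z) := mul_le_mul_of_nonneg_left (ih z a ha) hC0
      _ = C ^ (i :: w).length * dist a z := by rw [List.length_cons, pow_succ]; ring

lemma wf_continuous {f : I → X → X} (hcont : ∀ i, Continuous (f i)) (w : List I) :
    Continuous (fun x : X => wf f w x) := by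
  induction w with
  | nil => exact continuous_id
  | cons i w ih => exact (hcont i).comp ih

lemma wf_dist_of_closure {f : I → X → X} {C : ℝ} (hC0 : 0 ≤ C)
    (hcont : ∀ i, Continuous (f i)) (horb : OrbitalContr f C) {y z : X}
    (hy : y ∈ closure (orbitIFS f z)) {D : ℝ} (hD : ∀ w : List I, dist (wf f w z) z ≤ D)
    (w : List I) : dist (wf f w y) (wf f w z) ≤ C ^ w.length * D := by
  obtain ⟨a, ha, hlim⟩ := mem_closure_iff_seq_limit.1 hy
  have h1 : Tendsto (fun k => dist (wf f w (a k)) (wf f w z)) atTop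
      (nhds (dist (wf f w y) (wf f w z))) :=
    (((wf_continuous hcont w).tendsto y).comp hlim).dist tendsto_const_nhds
  refine le_of_tendsto h1 (Eventually.of_forall fun k => ?_)
  have h2 : dist (a k) z ≤ D := by
    obtain ⟨v, hv⟩ := mem_orbit_iff.1 (ha k)
    rw [← hv]; exact hD v
  exact (wf_contract hC0 horb w z (a k) (ha k)).trans
    (mul_le_mul_of_nonneg_left h2 (pow_nonneg hC0 _))

lemma lev_closed {g : X → ℝ} (husc : UpperSemicontinuous g) (α : ℝ) :
    IsClosed {p : X | α ≤ g p} := by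
  have h := husc.isOpen_preimage α
  have he : {p : X | α ≤ g p} = (g ⁻¹' Iio α)ᶜ := by ext p; simp [not_lt]
  rw [he]; exact h.isClosed_compl

lemma lev_star_nonempty {g : X → ℝ} (hg : ∃ p, g p = 1) {α : ℝ} (hα1 : α ≤ 1) :
    {p : X | α ≤ g p}.Nonempty := by
  obtain ⟨p, hp⟩ := hg
  exact ⟨p, by rw [Set.mem_setOf_eq, hp]; exact hα1⟩

lemma lev_star_subset {g : X → ℝ} {α : ℝ} (hα0 : 0 < α) :
    {p : X | α ≤ g p} ⊆ fsupp g :=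
  fun p hp => subset_closure (lt_of_lt_of_le hα0 hp)

lemma lev_star_bounded {g : X → ℝ} (hcomp : IsCompact (fsupp g)) {α : ℝ} (hα0 : 0 < α) :
    Bornology.IsBounded {p : X | α ≤ g p} :=
  hcomp.isBounded.subset (lev_star_subset hα0)

lemma hdist_le_dInfty {f : I → X → X} {ρ : I → ℝ → ℝ} (hρ : Admissible ρ) (n : ℕ) (z : X)
    {g : X → ℝ} (hg1 : ∃ p, g p = 1) (hcomp : IsCompact (fsupp g))
    {α : ℝ} (hα : α ∈ Ioc (0:ℝ) 1) :
    hausdorffDist {p : X | α ≤ (Zop f ρ)^[n] (fdelta z) p} {p : X | α ≤ g p} ≤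
      dInfty ((Zop f ρ)^[n] (fdelta z)) g := by
  set v := (Zop f ρ)^[n] (fdelta z) with hv
  set S : Set X := (fun w : List I => wf f w z) '' {w | w.length = n} with hS
  have hSfin : S.Finite := (List.finite_length_eq (α := I) (n := n)).image _
  set B : Set X := S ∪ fsupp g with hB
  have hBb : Bornology.IsBounded B := hSfin.isBounded.union hcomp.isBounded
  have hbd : ∀ β : Ioc (0:ℝ) 1,
      hausdorffDist {x : X | (β:ℝ) ≤ v x} {x : X | (β:ℝ) ≤ g x} ≤ Metric.diam B := by
    intro β
    have hLv : {x : X | (β:ℝ) ≤ v x} ⊆ B := by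
      intro p hp
      rw [hv] at hp
      rw [Set.mem_setOf_eq, level_iter hρ n z (β:ℝ) β.2.1 p] at hp
      obtain ⟨w, hw1, _, hw3⟩ := hp
      exact Or.inl ⟨w, hw1, hw3⟩
    have hLg : {x : X | (β:ℝ) ≤ g x} ⊆ B := fun p hp => Or.inr (lev_star_subset β.2.1 hp)
    have hLvne : {x : X | (β:ℝ) ≤ v x}.Nonempty := lev_iter_nonempty hρ n z β.2.1 β.2.2
    have hLgne : {x : X | (β:ℝ) ≤ g x}.Nonempty := lev_star_nonempty hg1 β.2.2
    refine hausdorffDist_le_of_mem_dist Metric.diam_nonneg ?_ ?_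
    · intro x hx
      obtain ⟨q, hq⟩ := hLgne
      exact ⟨q, hq, Metric.dist_le_diam_of_mem hBb (hLv hx) (hLg hq)⟩
    · intro x hx
      obtain ⟨q, hq⟩ := hLvne
      exact ⟨q, hq, Metric.dist_le_diam_of_mem hBb (hLg hx) (hLv hq)⟩
  have hbdd : BddAbove (Set.range fun β : Ioc (0:ℝ) 1 =>
      hausdorffDist {x : X | (β:ℝ) ≤ v x} {x : X | (β:ℝ) ≤ g x}) := by
    refine ⟨Metric.diam B, ?_⟩
    rintro _ ⟨β, rfl⟩
    exact hbd β
  exact le_ciSup (f := fun β : Ioc (0:ℝ) 1 =>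
    hausdorffDist {x : X | (β:ℝ) ≤ v x} {x : X | (β:ℝ) ≤ g x}) hbdd ⟨α, hα⟩

lemma edist_fin_of_ne_bdd {s t : Set X} (hs : s.Nonempty) (ht : t.Nonempty)
    (hbs : Bornology.IsBounded s) (hbt : Bornology.IsBounded t) :
    EMetric.hausdorffEdist s t ≠ ⊤ :=
  hausdorffEdist_ne_top_of_nonempty_of_bounded hs ht hbs hbt

lemma mem_closure_orbit_of_pos {f : I → X → X} {ρ : I → ℝ → ℝ} (hρ : Admissible ρ)
    {g : X → ℝ} {z y : X} (hg : InFS f g)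
    (hten : Tendsto (fun n => dInfty ((Zop f ρ)^[n] (fdelta z)) g) atTop (nhds 0))
    (hy : 0 < g y) : y ∈ closure (orbitIFS f z) := by
  rw [Metric.mem_closure_iff]
  intro ε hε
  set α := g y with hαdef
  have hα0 : 0 < α := hy
  have hα1 : α ≤ 1 := (hg.1.1.1 y).2
  obtain ⟨n, hn⟩ := (hten.eventually (gt_mem_nhds (half_pos hε))).exists
  set v := (Zop f ρ)^[n] (fdelta z) with hv
  have hLvne : {p : X | α ≤ v p}.Nonempty := lev_iter_nonempty hρ n z hα0 hα1
  have hLvfin : {p : X | α ≤ v p}.Finite := lev_iter_finite hρ n z hα0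
  have hLgne : {p : X | α ≤ g p}.Nonempty := lev_star_nonempty hg.1.1.2.1 hα1
  have hfin : EMetric.hausdorffEdist {p : X | α ≤ g p} {p : X | α ≤ v p} ≠ ⊤ :=
    edist_fin_of_ne_bdd hLgne hLvne (lev_star_bounded hg.1.1.2.2 hα0) hLvfin.isBounded
  have hyL : y ∈ {p : X | α ≤ g p} := by
    rw [Set.mem_setOf_eq]
  have h1 : Metric.infDist y {p : X | α ≤ v p} < ε := by
    calc Metric.infDist y {p : X | α ≤ v p}
        ≤ hausdorffDist {p : X | α ≤ g p} {p : X | α ≤ v p} :=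
          Metric.infDist_le_hausdorffDist_of_mem hyL hfin
      _ = hausdorffDist {p : X | α ≤ v p} {p : X | α ≤ g p} := hausdorffDist_comm
      _ ≤ dInfty v g := hdist_le_dInfty hρ n z hg.1.1.2.1 hg.1.1.2.2 ⟨hα0, hα1⟩
      _ < ε / 2 := hn
      _ < ε := by linarith
  obtain ⟨a, haL, hda⟩ := (Metric.infDist_lt_iff hLvne).1 h1
  rw [Set.mem_setOf_eq, level_iter hρ n z α hα0 a] at haL
  obtain ⟨w, _, _, hw3⟩ := haL
  exact ⟨a, hw3 ▸ wf_mem_orbit f w z, hda⟩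

lemma coherence {f : I → X → X} {ρ : I → ℝ → ℝ} {C : ℝ}
    (hcont : ∀ i, Continuous (f i)) (hC0 : 0 ≤ C) (hC1 : C < 1)
    (horb : OrbitalContr f C) (hρ : Admissible ρ)
    {g g' : X → ℝ} {z z' y0 : X} (hg : InFS f g) (hg' : InFS f g')
    (htg : Tendsto (fun n => dInfty ((Zop f ρ)^[n] (fdelta z)) g) atTop (nhds 0))
    (htg' : Tendsto (fun n => dInfty ((Zop f ρ)^[n] (fdelta z')) g') atTop (nhds 0))
    (h1 : 0 < g y0) (h2 : 0 < g' y0) : g = g' := by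
  have hycl : y0 ∈ closure (orbitIFS f z) := mem_closure_orbit_of_pos hρ hg htg h1
  have hycl' : y0 ∈ closure (orbitIFS f z') := mem_closure_orbit_of_pos hρ hg' htg' h2
  obtain ⟨D, hD0, hD⟩ := orbit_bound hC0 hC1 horb z
  obtain ⟨D', hD'0, hD'⟩ := orbit_bound hC0 hC1 horb z'
  have hlev : ∀ α : ℝ, 0 < α → α ≤ 1 → {p : X | α ≤ g p} = {p : X | α ≤ g' p} := by
    intro α hα0 hα1
    set A := {p : X | α ≤ g p} with hA
    set A' := {p : X | α ≤ g' p} with hA'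
    have hAne : A.Nonempty := lev_star_nonempty hg.1.1.2.1 hα1
    have hA'ne : A'.Nonempty := lev_star_nonempty hg'.1.1.2.1 hα1
    have hAb : Bornology.IsBounded A := lev_star_bounded hg.1.1.2.2 hα0
    have hA'b : Bornology.IsBounded A' := lev_star_bounded hg'.1.1.2.2 hα0
    have key : ∀ n : ℕ, hausdorffDist A A' ≤
        dInfty ((Zop f ρ)^[n] (fdelta z)) g + (C ^ n * D + C ^ n * D') +
          dInfty ((Zop f ρ)^[n] (fdelta z')) g' := by
      intro n
      set Bn := {p : X | α ≤ (Zop f ρ)^[n] (fdelta z) p} with hBn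
      set Yn := {p : X | α ≤ (Zop f ρ)^[n] (fdelta y0) p} with hYn
      set B'n := {p : X | α ≤ (Zop f ρ)^[n] (fdelta z') p} with hB'n
      have hBne : Bn.Nonempty := lev_iter_nonempty hρ n z hα0 hα1
      have hYne : Yn.Nonempty := lev_iter_nonempty hρ n y0 hα0 hα1
      have hB'ne : B'n.Nonempty := lev_iter_nonempty hρ n z' hα0 hα1
      have hBb : Bornology.IsBounded Bn := (lev_iter_finite hρ n z hα0).isBounded
      have hYb : Bornology.IsBounded Yn := (lev_iter_finite hρ n y0 hα0).isBounded
      have hB'b : Bornology.IsBounded B'n := (lev_iter_finite hρ n z' hα0).isBounded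
      have t1 : hausdorffDist A A' ≤ hausdorffDist A Bn + hausdorffDist Bn A' :=
        hausdorffDist_triangle (edist_fin_of_ne_bdd hAne hBne hAb hBb)
      have t2 : hausdorffDist Bn A' ≤ hausdorffDist Bn Yn + hausdorffDist Yn A' :=
        hausdorffDist_triangle (edist_fin_of_ne_bdd hBne hYne hBb hYb)
      have t3 : hausdorffDist Yn A' ≤ hausdorffDist Yn B'n + hausdorffDist B'n A' :=
        hausdorffDist_triangle (edist_fin_of_ne_bdd hYne hB'ne hYb hB'b)
      have b1 : hausdorffDist A Bn ≤ dInfty ((Zop f ρ)^[n] (fdelta z)) g := by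
        rw [hausdorffDist_comm]
        exact hdist_le_dInfty hρ n z hg.1.1.2.1 hg.1.1.2.2 ⟨hα0, hα1⟩
      have b4 : hausdorffDist B'n A' ≤ dInfty ((Zop f ρ)^[n] (fdelta z')) g' :=
        hdist_le_dInfty hρ n z' hg'.1.1.2.1 hg'.1.1.2.2 ⟨hα0, hα1⟩
      have b2 : hausdorffDist Bn Yn ≤ C ^ n * D := by
        rw [hBn, hYn, lev_iter_eq hρ n z hα0, lev_iter_eq hρ n y0 hα0]
        refine hausdorffDist_le_of_mem_dist (by positivity) ?_ ?_
        · rintro _ ⟨w, hw, rfl⟩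
          refine ⟨wf f w y0, Set.mem_image_of_mem _ hw, ?_⟩
          rw [dist_comm]
          have := wf_dist_of_closure hC0 hcont horb hycl hD w
          rwa [hw.1] at this
        · rintro _ ⟨w, hw, rfl⟩
          refine ⟨wf f w z, Set.mem_image_of_mem _ hw, ?_⟩
          have := wf_dist_of_closure hC0 hcont horb hycl hD w
          rwa [hw.1] at this
      have b3 : hausdorffDist Yn B'n ≤ C ^ n * D' := by
        rw [hYn, hB'n, lev_iter_eq hρ n y0 hα0, lev_iter_eq hρ n z' hα0]
        refine hausdorffDist_le_of_mem_dist (by positivity) ?_ ?_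
        · rintro _ ⟨w, hw, rfl⟩
          refine ⟨wf f w z', Set.mem_image_of_mem _ hw, ?_⟩
          have := wf_dist_of_closure hC0 hcont horb hycl' hD' w
          rwa [hw.1] at this
        · rintro _ ⟨w, hw, rfl⟩
          refine ⟨wf f w y0, Set.mem_image_of_mem _ hw, ?_⟩
          rw [dist_comm]
          have := wf_dist_of_closure hC0 hcont horb hycl' hD' w
          rwa [hw.1] at this
      calc hausdorffDist A A' ≤ hausdorffDist A Bn + hausdorffDist Bn A' := t1
        _ ≤ hausdorffDist A Bn + (hausdorffDist Bn Yn + hausdorffDist Yn A') := by linarith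
        _ ≤ hausdorffDist A Bn +
            (hausdorffDist Bn Yn + (hausdorffDist Yn B'n + hausdorffDist B'n A')) := by linarith
        _ ≤ dInfty ((Zop f ρ)^[n] (fdelta z)) g + (C ^ n * D + C ^ n * D') +
            dInfty ((Zop f ρ)^[n] (fdelta z')) g' := by linarith
    have hCn : Tendsto (fun n : ℕ => C ^ n) atTop (nhds 0) :=
      tendsto_pow_atTop_nhds_zero_of_lt_one hC0 hC1
    have hlim : Tendsto (fun n : ℕ =>
        dInfty ((Zop f ρ)^[n] (fdelta z)) g + (C ^ n * D + C ^ n * D') +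
          dInfty ((Zop f ρ)^[n] (fdelta z')) g') atTop (nhds 0) := by
      have := (htg.add ((hCn.mul_const D).add (hCn.mul_const D'))).add htg'
      simpa using this
    have h0 : hausdorffDist A A' ≤ 0 := ge_of_tendsto hlim (Eventually.of_forall key)
    have heq0 : hausdorffDist A A' = 0 := le_antisymm h0 hausdorffDist_nonneg
    have hfin : EMetric.hausdorffEdist A A' ≠ ⊤ :=
      edist_fin_of_ne_bdd hAne hA'ne hAb hA'b
    exact (IsClosed.hausdorffDist_zero_iff_eq (lev_closed hg.1.2 α)
      (lev_closed hg'.1.2 α) hfin).1 heq0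
  funext p
  refine le_antisymm ?_ ?_
  · rcases le_or_gt (g p) 0 with h | h
    · exact le_trans h (hg'.1.1.1 p).1
    · have hmem : p ∈ {q : X | g p ≤ g q} := by rw [Set.mem_setOf_eq]
      rw [hlev (g p) h (hg.1.1.1 p).2] at hmem
      exact hmem
  · rcases le_or_gt (g' p) 0 with h | h
    · exact le_trans h (hg.1.1.1 p).1
    · have hmem : p ∈ {q : X | g' p ≤ g' q} := by rw [Set.mem_setOf_eq]
      rw [← hlev (g' p) h (hg'.1.1.1 p).2] at hmem
      exact hmem

end Stmt10Aux

/-- Remark 3.5: the pointwise supremum `∨_{x ∈ [u]^*} u_x` is attained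
as a pointwise maximum. -/
theorem stmt10 {X I : Type*} [MetricSpace X] [CompleteSpace X] [DecidableEq X]
    [Finite I] [Nonempty I]
    (f : I → X → X) (hcont : ∀ i, Continuous (f i))
    (C : ℝ) (hC0 : 0 ≤ C) (hC1 : C < 1) (horb : OrbitalContr f C)
    (ρ : I → ℝ → ℝ) (hρ : Admissible ρ)
    (u : X → ℝ) (hu : InFS f u)
    (U : X → X → ℝ) (hUStar : ∀ x, 0 < u x → InFS f (U x))
    (hU : ∀ x, 0 < u x →
      Tendsto (fun n => dInfty ((Zop f ρ)^[n] (fdelta x)) (U x)) atTop (nhds 0)) :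
    ∀ y, ∃ x : {x // 0 < u x}, U x.1 y = ⨆ z : {z // 0 < u z}, U z.1 y := by
  intro y
  obtain ⟨x1, hx1⟩ := hu.1.1.2.1
  have hx1pos : 0 < u x1 := by rw [hx1]; norm_num
  haveI : Nonempty {x // 0 < u x} := ⟨⟨x1, hx1pos⟩⟩
  have hbdd : BddAbove (Set.range fun z : {z // 0 < u z} => U z.1 y) := by
    refine ⟨1, ?_⟩
    rintro _ ⟨z, rfl⟩
    exact ((hUStar z.1 z.2).1.1.1 y).2
  by_cases hpos : ∃ z : {z // 0 < u z}, 0 < U z.1 y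
  · obtain ⟨z, hz⟩ := hpos
    refine ⟨z, le_antisymm (le_ciSup hbdd z) (ciSup_le fun z' => ?_)⟩
    rcases le_or_gt (U z'.1 y) 0 with h | h
    · exact le_trans h (le_of_lt hz)
    · have heq : U z'.1 = U z.1 :=
        Stmt10Aux.coherence hcont hC0 hC1 horb hρ (hUStar z'.1 z'.2) (hUStar z.1 z.2)
          (hU z'.1 z'.2) (hU z.1 z.2) h hz
      rw [heq]
  · push_neg at hpos
    refine ⟨⟨x1, hx1pos⟩, le_antisymm (le_ciSup hbdd ⟨x1, hx1pos⟩) (ciSup_le fun z => ?_)⟩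
    exact le_trans (hpos z) ((hUStar x1 hx1pos).1.1.1 y).1
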